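/- Let 0 < q ≤ 1 and let λ be real with |λ| < 1. For every positive integer t, the series Σ_{m=0}^∞ ĥ_{qm}(t)·λ^m defining the discrete Mittag-Leffler function F_{q,λ}(t) is summable. -/

import Mathlib

/-- Generalized binomial coefficient `ĥ_α(x) = Γ(x+α)/(Γ(α+1)·Γ(x))`. -/
noncomputable def hhat (α x : ℝ) : ℝ :=
  Real.Gamma (x + α) / (Real.Gamma (α + 1) * Real.Gamma x)

lemma gamma_nat_add_prod (α : ℝ) (hα : 0 ≤ α) (n : ℕ) :
    Real.Gamma ((n : ℝ) + 1 + α)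
      = Real.Gamma (α + 1) * ∏ j ∈ Finset.range n, (α + j + 1) := by
  induction n with
  | zero => simp [add_comm]
  | succ n ih =>
    have h : ((n : ℕ) + 1 : ℝ) + 1 + α = ((n : ℝ) + 1 + α) + 1 := by push_cast; ring
    have hne : ((n : ℝ) + 1 + α) ≠ 0 := by positivity
    rw [Finset.prod_range_succ]
    push_cast
    rw [h, Real.Gamma_add_one hne, ih]
    push_cast; ring

/-- The series `Σ_m ĥ_{qm}(t)·λ^m` defining the discrete Mittag-Leffler function `F_{q,λ}(t)`
is summable for `0 < q ≤ 1`, `|λ| < 1`, and positive integers `t`. -/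
theorem dML_summable (q lam : ℝ) (hq0 : 0 < q) (hq1 : q ≤ 1) (hlam : |lam| < 1)
    (t : ℕ) (ht : 1 ≤ t) :
    Summable (fun m : ℕ => hhat (q * m) (t : ℝ) * lam ^ m) := by
  obtain ⟨k, rfl⟩ : ∃ k, t = k + 1 := ⟨t - 1, (Nat.succ_pred_eq_of_pos ht).symm⟩
  set r := |lam| with hr
  have hr0 : 0 ≤ r := abs_nonneg _
  have hr1 : r < 1 := hlam
  -- closed form for hhat
  have key : ∀ m : ℕ, hhat (q * m) ((k + 1 : ℕ) : ℝ)
      = (∏ j ∈ Finset.range k, (q * m + j + 1)) / (k.factorial : ℝ) := by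
    intro m
    have hα : (0 : ℝ) ≤ q * m := by positivity
    have h1 : ((k + 1 : ℕ) : ℝ) + q * m = (k : ℝ) + 1 + q * m := by push_cast; ring
    have h2 : Real.Gamma ((k + 1 : ℕ) : ℝ) = (k.factorial : ℝ) := by
      rw [show ((k + 1 : ℕ) : ℝ) = (k : ℝ) + 1 by push_cast; ring,
        Real.Gamma_nat_eq_factorial]
    have hΓne : Real.Gamma (q * m + 1) ≠ 0 :=
      ne_of_gt (Real.Gamma_pos_of_pos (by positivity))
    rw [hhat, h1, gamma_nat_add_prod (q * m) hα k, h2, mul_div_mul_left _ _ hΓne]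
  -- summable majorant
  set C : ℝ := (2 * (k + 1 : ℕ) : ℝ) ^ k / (k.factorial : ℝ) with hC
  have hg : Summable (fun m : ℕ => C * ((m : ℝ) ^ k * r ^ m) + C * r ^ m) := by
    have h1 : Summable (fun m : ℕ => (m : ℝ) ^ k * r ^ m) := by
      have := summable_pow_mul_geometric_of_norm_lt_one (R := ℝ) k
        (r := r) (by simpa [abs_of_nonneg hr0] using hr1)
      simpa using this
    have h2 : Summable (fun m : ℕ => r ^ m) := summable_geometric_of_lt_one hr0 hr1
    exact (h1.mul_left C).add (h2.mul_left C)
  apply Summable.of_norm_bounded hg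
  intro m
  have hfact : (0 : ℝ) < (k.factorial : ℝ) := by positivity
  have hprod_nonneg : (0 : ℝ) ≤ ∏ j ∈ Finset.range k, (q * m + j + 1) :=
    Finset.prod_nonneg fun j _ => by positivity
  have hprod_le : (∏ j ∈ Finset.range k, (q * m + j + 1)) ≤ ((m : ℝ) + (k + 1)) ^ k := by
    calc (∏ j ∈ Finset.range k, (q * m + j + 1))
        ≤ ∏ j ∈ Finset.range k, ((m : ℝ) + (k + 1)) := by
          apply Finset.prod_le_prod (fun j _ => by positivity)
          intro j hj
          have hjk : (j : ℝ) + 1 ≤ (k : ℝ) + 1 := by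
            have := Finset.mem_range.mp hj
            have : (j : ℝ) ≤ k := by exact_mod_cast this.le
            linarith
          have hqm : q * m ≤ (m : ℝ) := by
            nlinarith [Nat.cast_nonneg (α := ℝ) m]
          linarith
      _ = ((m : ℝ) + (k + 1)) ^ k := by rw [Finset.prod_const, Finset.card_range]
  have hpow : ((m : ℝ) + (k + 1)) ^ k
      ≤ (2 * (k + 1 : ℕ) : ℝ) ^ k * (m : ℝ) ^ k + (2 * (k + 1 : ℕ) : ℝ) ^ k := by
    rcases Nat.eq_zero_or_pos m with hm | hm
    · subst hm
      simp only [Nat.cast_zero, zero_add]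
      have h1 : ((k : ℝ) + 1) ^ k ≤ (2 * (k + 1 : ℕ) : ℝ) ^ k := by
        apply pow_le_pow_left₀ (by positivity)
        push_cast; linarith
      nlinarith [pow_nonneg (by positivity : (0:ℝ) ≤ (2 * (k + 1 : ℕ) : ℝ)) k,
        pow_nonneg (by norm_num : (0:ℝ) ≤ (0:ℝ)) k]
    · have hm1 : (1 : ℝ) ≤ (m : ℝ) := by exact_mod_cast hm
      have hle : (m : ℝ) + (k + 1) ≤ (2 * (k + 1 : ℕ) : ℝ) * m := by
        push_cast; nlinarith
      calc ((m : ℝ) + (k + 1)) ^ k ≤ ((2 * (k + 1 : ℕ) : ℝ) * m) ^ k :=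
            pow_le_pow_left₀ (by positivity) hle k
        _ = (2 * (k + 1 : ℕ) : ℝ) ^ k * (m : ℝ) ^ k := mul_pow _ _ _
        _ ≤ _ := by
            have : (0:ℝ) ≤ (2 * (k + 1 : ℕ) : ℝ) ^ k := by positivity
            linarith
  have hrm : (0 : ℝ) ≤ r ^ m := by positivity
  calc ‖hhat (q * m) ((k + 1 : ℕ) : ℝ) * lam ^ m‖
      = hhat (q * m) ((k + 1 : ℕ) : ℝ) * r ^ m := by
        rw [norm_mul, norm_pow, Real.norm_eq_abs, Real.norm_eq_abs, ← hr, key m,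
          abs_of_nonneg (by positivity)]
    _ ≤ (((2 * (k + 1 : ℕ) : ℝ) ^ k * (m : ℝ) ^ k + (2 * (k + 1 : ℕ) : ℝ) ^ k)
          / (k.factorial : ℝ)) * r ^ m := by
        apply mul_le_mul_of_nonneg_right _ hrm
        rw [key m]
        gcongr
        exact hprod_le.trans hpow
    _ = C * ((m : ℝ) ^ k * r ^ m) + C * r ^ m := by rw [hC]; ring
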